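/- Let p ∈ (0,1) be real, and let Δ ≥ 1, d⁻, d, n be natural numbers with 2 ≤ d⁻ ≤ d ≤ n. Set A = min{(Δ-1)·d/(d⁻-1), Δ·n/d⁻} (as a real number). Then for every function a : {0,1,…,d⁻-1} → ℝ with a_i ≥ 0 for all i, Σ_{i=0}^{d⁻-1} i·a_i ≤ (Δ-1)·d, and Σ_{i=0}^{d⁻-1} a_i ≤ Δ·n/d⁻, one has Π_{i=0}^{d⁻-1} (1-p^{d⁻-i})^{a_i} ≥ (1-p)^A · (1-p^{d⁻})^{Δ·n/d⁻ - A}, where all powers with real exponents are real powers (rpow). -/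

import Mathlib

open Finset

private lemma rpow_sum_aux (x : ℝ) (hx : 0 < x) (s : Finset ℕ) (f : ℕ → ℝ) :
    x ^ (∑ i ∈ s, f i) = ∏ i ∈ s, x ^ f i := by
  classical
  induction s using Finset.cons_induction with
  | empty => simp
  | cons i s hi ih => rw [Finset.sum_cons, Finset.prod_cons, Real.rpow_add hx, ih]

private lemma pow_convex (p : ℝ) (hp0 : 0 ≤ p) (hp1 : p ≤ 1) (k : ℕ) (hk : 1 ≤ k) :
    ∀ m, k ≤ m → ((m : ℝ) - 1) * p ^ k ≤ ((k : ℝ) - 1) * p ^ m + ((m : ℝ) - k) * p := by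
  intro m hm
  induction m, hm using Nat.le_induction with
  | base => simp
  | succ m hm ih =>
    have key : ((k : ℝ) - 1) * p ^ m * (1 - p) ≤ p - p ^ k := by
      obtain ⟨t, rfl⟩ : ∃ t, k = t + 1 := ⟨k - 1, by omega⟩
      have ht : (t : ℝ) * p ^ m ≤ ∑ i ∈ Finset.range t, p * p ^ i := by
        calc (t : ℝ) * p ^ m = ∑ _i ∈ Finset.range t, p ^ m := by
              rw [Finset.sum_const, Finset.card_range, nsmul_eq_mul]
          _ ≤ ∑ i ∈ Finset.range t, p * p ^ i := by
              refine Finset.sum_le_sum fun i hi => ?_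
              rw [← pow_succ']
              exact pow_le_pow_of_le_one hp0 hp1 (by
                have := Finset.mem_range.mp hi; omega)
      have hgeom : (1 - p) * ∑ i ∈ Finset.range t, p ^ i = 1 - p ^ t := by
        have h := geom_sum_mul p t
        nlinarith [h]
      have h1p : 0 ≤ 1 - p := by linarith
      have step : ((t + 1 : ℕ) : ℝ) - 1 = (t : ℝ) := by push_cast; ring
      rw [step]
      calc (t : ℝ) * p ^ m * (1 - p) ≤ (∑ i ∈ Finset.range t, p * p ^ i) * (1 - p) := by
            exact mul_le_mul_of_nonneg_right ht h1p
        _ = p * ((1 - p) * ∑ i ∈ Finset.range t, p ^ i) := by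
            simp only [Finset.mul_sum, Finset.sum_mul]
            exact Finset.sum_congr rfl fun i _ => by ring
        _ = p * (1 - p ^ t) := by rw [hgeom]
        _ = p - p ^ (t + 1) := by ring
    have hpow : p ^ (m + 1) = p ^ m * p := pow_succ p m
    push_cast
    nlinarith [key, ih]

theorem closed_form_nb (p : ℝ) (hp0 : 0 < p) (hp1 : p < 1)
    (Δ dm d n : ℕ) (hΔ : 1 ≤ Δ) (hdm : 2 ≤ dm) (hdmd : dm ≤ d) (hdn : d ≤ n)
    (A : ℝ) (hA : A = min (((Δ : ℝ) - 1) * d / ((dm : ℝ) - 1)) ((Δ : ℝ) * n / dm))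
    (a : ℕ → ℝ) (ha : ∀ i, 0 ≤ a i)
    (h1 : ∑ i ∈ Finset.range dm, (i : ℝ) * a i ≤ ((Δ : ℝ) - 1) * d)
    (h2 : ∑ i ∈ Finset.range dm, a i ≤ (Δ : ℝ) * n / dm) :
    ∏ i ∈ Finset.range dm, (1 - p ^ (dm - i)) ^ (a i) ≥
      (1 - p) ^ A * (1 - p ^ dm) ^ ((Δ : ℝ) * n / dm - A) := by
  set c : ℝ := (dm : ℝ) - 1 with hcdef
  have hdm2 : (2 : ℝ) ≤ (dm : ℝ) := by exact_mod_cast hdm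
  have hc1 : (1 : ℝ) ≤ c := by simp only [hcdef]; linarith
  have hc0 : (0 : ℝ) < c := by linarith
  set q1 : ℝ := 1 - p with hq1def
  set qd : ℝ := 1 - p ^ dm with hqddef
  have hq10 : 0 < q1 := by simp only [hq1def]; linarith
  have hpd1 : p ^ dm < 1 := pow_lt_one₀ hp0.le hp1 (by omega)
  have hpd0 : 0 ≤ p ^ dm := by positivity
  have hqd0 : 0 < qd := by simp only [hqddef]; linarith
  have hqd1 : qd ≤ 1 := by simp only [hqddef]; linarith
  have hq1qd : q1 ≤ qd := by
    have h : p ^ dm ≤ p := by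
      simpa using pow_le_pow_of_le_one hp0.le hp1.le (by omega : 1 ≤ dm)
    simp only [hq1def, hqddef]
    linarith
  set w : ℕ → ℝ := fun i => (i : ℝ) / c with hwdef
  -- per-index weight facts
  have hw0 : ∀ i, 0 ≤ w i := fun i => div_nonneg (Nat.cast_nonneg i) hc0.le
  have hw1 : ∀ i ∈ Finset.range dm, w i ≤ 1 := by
    intro i hi
    have hi' : i < dm := Finset.mem_range.mp hi
    have : (i : ℝ) + 1 ≤ (dm : ℝ) := by exact_mod_cast hi'
    rw [hwdef]
    rw [div_le_one hc0]
    simp only [hcdef]; linarith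
  -- key per-index inequality
  have key : ∀ i ∈ Finset.range dm, qd ^ (1 - w i) * q1 ^ (w i) ≤ 1 - p ^ (dm - i) := by
    intro i hi
    have hi' : i < dm := Finset.mem_range.mp hi
    have hwi0 := hw0 i
    have hwi1 := hw1 i hi
    have amgm := Real.geom_mean_le_arith_mean2_weighted (by linarith : (0:ℝ) ≤ 1 - w i)
      hwi0 hqd0.le hq10.le (by ring)
    have hconv := pow_convex p hp0.le hp1.le (dm - i) (by omega) dm (by omega)
    have hcast : ((dm - i : ℕ) : ℝ) = (dm : ℝ) - (i : ℝ) := by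
      rw [Nat.cast_sub hi'.le]
    rw [hcast] at hconv
    -- hconv : c * p^(dm-i) ≤ ((dm:ℝ) - i - 1) * p^dm + ((dm:ℝ) - ((dm:ℝ) - i)) * p
    have hbound : p ^ (dm - i) ≤ (1 - w i) * p ^ dm + w i * p := by
      have e : (1 - w i) * p ^ dm + w i * p
          = (((dm : ℝ) - (i : ℝ) - 1) * p ^ dm + ((dm : ℝ) - ((dm : ℝ) - (i : ℝ))) * p) / c := by
        field_simp [hwdef, hcdef]
        have hwc : w i * c = (i : ℝ) := by
          show (i : ℝ) / c * c = i
          exact div_mul_cancel₀ _ hc0.ne'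
        linear_combination (p - p ^ dm) * hwc + p ^ dm * hcdef
      rw [e, le_div_iff₀ hc0, mul_comm]
      exact hconv
    calc qd ^ (1 - w i) * q1 ^ (w i) ≤ (1 - w i) * qd + w i * q1 := amgm
      _ = 1 - ((1 - w i) * p ^ dm + w i * p) := by simp only [hqddef, hq1def]; ring
      _ ≤ 1 - p ^ (dm - i) := by linarith
  -- pointwise rpow bound
  have pointwise : ∀ i ∈ Finset.range dm,
      qd ^ ((1 - w i) * a i) * q1 ^ (w i * a i) ≤ (1 - p ^ (dm - i)) ^ (a i) := by
    intro i hi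
    have e : qd ^ ((1 - w i) * a i) * q1 ^ (w i * a i)
        = (qd ^ (1 - w i) * q1 ^ (w i)) ^ (a i) := by
      rw [Real.mul_rpow (Real.rpow_nonneg hqd0.le _) (Real.rpow_nonneg hq10.le _),
        ← Real.rpow_mul hqd0.le, ← Real.rpow_mul hq10.le]
    rw [e]
    exact Real.rpow_le_rpow (by positivity) (key i hi) (ha i)
  -- product bound
  set S : ℝ := (Δ : ℝ) * n / dm with hSdef
  set M : ℝ := ∑ i ∈ Finset.range dm, w i * a i with hMdef
  set N : ℝ := ∑ i ∈ Finset.range dm, (1 - w i) * a i with hNdef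
  set T : ℝ := ∑ i ∈ Finset.range dm, a i with hTdef
  have prodbound : qd ^ N * q1 ^ M ≤ ∏ i ∈ Finset.range dm, (1 - p ^ (dm - i)) ^ (a i) := by
    rw [hNdef, hMdef, rpow_sum_aux qd hqd0, rpow_sum_aux q1 hq10, ← Finset.prod_mul_distrib]
    exact Finset.prod_le_prod (fun i _ => by positivity) pointwise
  have hNTM : N = T - M := by
    rw [hNdef, hTdef, hMdef, ← Finset.sum_sub_distrib]
    exact Finset.sum_congr rfl fun i _ => by ring
  have hM0 : 0 ≤ M := Finset.sum_nonneg fun i _ => mul_nonneg (hw0 i) (ha i)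
  have hMT : M ≤ T := Finset.sum_le_sum fun i hi => by
    nlinarith [hw1 i hi, ha i, hw0 i]
  have hTS : T ≤ S := h2
  have hMA : M ≤ A := by
    rw [hA]
    refine le_min ?_ (hMT.trans hTS)
    have e : M = (∑ i ∈ Finset.range dm, (i : ℝ) * a i) / c := by
      rw [hMdef, Finset.sum_div]
      exact Finset.sum_congr rfl fun i _ => by rw [hwdef]; ring
    rw [e]
    gcongr
  have hx0 : 0 ≤ A - M := by linarith
  have hy0 : 0 ≤ S - T := by linarith
  have final : q1 ^ A * qd ^ (S - A) ≤ qd ^ N * q1 ^ M := by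
    have e1 : q1 ^ A = q1 ^ M * q1 ^ (A - M) := by
      rw [← Real.rpow_add hq10]; congr 1; ring
    have e2 : qd ^ (S - A) = qd ^ N * qd ^ ((S - T) - (A - M)) := by
      rw [← Real.rpow_add hqd0]; congr 1; rw [hNTM]; ring
    have hle1 : q1 ^ (A - M) ≤ qd ^ (A - M) := Real.rpow_le_rpow hq10.le hq1qd hx0
    have hle2 : qd ^ (A - M) * qd ^ ((S - T) - (A - M)) ≤ 1 := by
      rw [← Real.rpow_add hqd0]
      have : (A - M) + ((S - T) - (A - M)) = S - T := by ring
      rw [this]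
      exact Real.rpow_le_one hqd0.le hqd1 hy0
    calc q1 ^ A * qd ^ (S - A)
        = (q1 ^ M * qd ^ N) * (q1 ^ (A - M) * qd ^ ((S - T) - (A - M))) := by
          rw [e1, e2]; ring
      _ ≤ (q1 ^ M * qd ^ N) * (qd ^ (A - M) * qd ^ ((S - T) - (A - M))) := by
          refine mul_le_mul_of_nonneg_left ?_ (by positivity)
          exact mul_le_mul_of_nonneg_right hle1 (Real.rpow_nonneg hqd0.le _)
      _ ≤ (q1 ^ M * qd ^ N) * 1 := mul_le_mul_of_nonneg_left hle2 (by positivity)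
      _ = qd ^ N * q1 ^ M := by ring
  exact le_trans final prodbound
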